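/- Let C₁ ≥ 1, set δ = 1 - (1/(2C₁)) ∈ (1/2, 1), let c₁ ≥ 10 with 1 + c₁/2 ≥ C₁², let ε = (1-δ)/(20 c₁), and ζ = √((1+δ)/2). Define, for ρ ∈ [0,1] and integer k ≥ 1, A = 1 + c₁(2δρ + 2ε/(ζ-ε))ζ^k + c₁²(δρ + ε/(ζ-ε))² ζ^{2k} and B = (1 + c₁ δρ ζ^k)(1 + c₁ ζ^{k+2}). Then B - (1 + 3ε^{k+1}) A ≥ 0. -/
import Mathlib
set_option maxHeartbeats 800000


/-- Key arithmetic inequality completing the induction step of the oscillation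
reduction lemma: with `δ = 1 - 1/(2C₁)`, `ε = (1-δ)/(20 c₁)`, `ζ = √((1+δ)/2)`,
and `A`, `B` defined as below, `B - (1 + 3 ε^{k+1}) A ≥ 0`. -/
theorem oscillation_key_inequality (C₁ c₁ δ ε ζ ρ : ℝ) (k : ℕ)
    (hC₁ : 1 ≤ C₁) (hδ : δ = 1 - 1 / (2 * C₁))
    (hc₁ : 10 ≤ c₁) (hc₁C : 1 + c₁ / 2 ≥ C₁ ^ 2)
    (hε : ε = (1 - δ) / (20 * c₁)) (hζ : ζ = Real.sqrt ((1 + δ) / 2))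
    (hρ0 : 0 ≤ ρ) (hρ1 : ρ ≤ 1) (hk : 1 ≤ k)
    (A B : ℝ)
    (hA : A = 1 + c₁ * (2 * δ * ρ + 2 * ε / (ζ - ε)) * ζ ^ k
            + c₁ ^ 2 * (δ * ρ + ε / (ζ - ε)) ^ 2 * ζ ^ (2 * k))
    (hB : B = (1 + c₁ * δ * ρ * ζ ^ k) * (1 + c₁ * ζ ^ (k + 2))) :
    0 ≤ B - (1 + 3 * ε ^ (k + 1)) * A := by
  have hC0 : 0 < C₁ := by linarith
  have hδlo : 1/2 ≤ δ := by
    rw [hδ]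
    have h : 1/(2*C₁) ≤ 1/2 := by
      rw [div_le_div_iff₀ (by linarith) (by norm_num)]; linarith
    linarith
  have hδhi : δ < 1 := by
    rw [hδ]
    have : 0 < 1/(2*C₁) := by positivity
    linarith
  have hζ0 : 0 ≤ ζ := hζ ▸ Real.sqrt_nonneg _
  have hζsq : ζ^2 = (1+δ)/2 := by
    rw [hζ, Real.sq_sqrt (by linarith)]
  have hζlo : 1/2 ≤ ζ := by nlinarith
  have hζhi : ζ ≤ 1 := by nlinarith
  have hε0 : 0 < ε := by
    rw [hε]; apply div_pos <;> linarith
  have hεc : 20*c₁*ε = 1-δ := by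
    rw [hε]; field_simp
  have hε400 : ε ≤ 1/400 := by
    linarith [mul_nonneg (show (0:ℝ) ≤ c₁ - 10 by linarith) hε0.le]
  have hζε : 1/4 ≤ ζ - ε := by linarith
  -- rewrite powers and fold abbreviations
  have h2k : ζ^(2*k) = (ζ^k)^2 := by rw [two_mul, pow_add, sq]
  have hk2 : ζ^(k+2) = ζ^k * ζ^2 := pow_add ζ k 2
  have hk1 : ε^(k+1) = ε^k * ε := pow_succ ε k
  rw [hA, hB, h2k, hk2, hk1, mul_div_assoc]
  clear hA hB hδ hζ hc₁C hC₁ hC0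
  clear A B
  set η := ε/(ζ-ε) with hηdef
  set X := ζ^k with hXdef
  set E := ε^k with hEdef
  have hη0 : 0 ≤ η := div_nonneg hε0.le (by linarith)
  have hη4 : η ≤ 4*ε := by
    rw [hηdef, div_le_iff₀ (by linarith)]
    linarith [mul_nonneg hε0.le (show (0:ℝ) ≤ 4*(ζ-ε)-1 by linarith)]
  have hη1 : η ≤ 1/100 := by linarith
  have hX0 : 0 < X := pow_pos (by linarith) k
  have hX1 : X ≤ 1 := pow_le_one₀ hζ0 hζhi
  have hE0 : 0 < E := pow_pos hε0 k
  have hEX : 20*c₁*E ≤ X := by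
    have h1 : (20*c₁) * E ≤ (20*c₁)^k * E := by
      apply mul_le_mul_of_nonneg_right _ hE0.le
      exact le_self_pow₀ (by linarith) (by omega)
    have h2 : (20*c₁)^k * E = (1-δ)^k := by
      rw [hEdef, ← mul_pow, hεc]
    have h3 : (1-δ)^k ≤ X := by
      rw [hXdef]
      exact pow_le_pow_left₀ (by linarith) (by linarith) k
    linarith
  have hδρ0 : 0 ≤ δ*ρ := mul_nonneg (by linarith) hρ0
  have hδρ1 : δ*ρ ≤ δ := mul_le_of_le_one_right (by linarith) hρ1
  -- Claim 1
  have c1 : (2/5)*(1-δ) ≤ ζ^2 - δ*ρ - 2*η := by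
    linarith [mul_nonneg (show (0:ℝ) ≤ c₁ - 4 by linarith) hε0.le, hζsq, hδρ1, hη4, hεc]
  -- Claim 2
  have c2 : -(16*ε^2) ≤ δ*ρ*ζ^2 - (δ*ρ+η)^2 := by
    linarith [mul_nonneg hδρ0 (show (0:ℝ) ≤ ζ^2 - δ*ρ - 2*η by linarith),
      mul_le_mul hη4 hη4 hη0 (by linarith : (0:ℝ) ≤ 4*ε)]
  -- B - A ≥ 3 X (1-δ)
  have t1 : c₁*X*((2/5)*(1-δ)) ≤ c₁*X*(ζ^2 - δ*ρ - 2*η) :=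
    mul_le_mul_of_nonneg_left c1 (by positivity)
  have t2 : c₁^2*X^2*(-(16*ε^2)) ≤ c₁^2*X^2*(δ*ρ*ζ^2 - (δ*ρ+η)^2) :=
    mul_le_mul_of_nonneg_left c2 (by positivity)
  have h16 : 16*c₁^2*X^2*ε^2 = X^2*(1-δ)^2/25 := by rw [← hεc]; ring
  have hu0 : 0 ≤ X*(1-δ) := mul_nonneg hX0.le (by linarith)
  have h_half : X*(1-δ) ≤ 1/2 := by
    linarith [mul_nonneg (show (0:ℝ) ≤ 1 - X by linarith) (show (0:ℝ) ≤ 1 - δ by linarith)]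
  have hmid : 3*X*(1-δ) + X^2*(1-δ)^2/25 ≤ (2/5)*(c₁*X*(1-δ)) := by
    linarith [mul_nonneg hu0 (show (0:ℝ) ≤ c₁ - 10 by linarith),
      mul_nonneg hu0 (show (0:ℝ) ≤ 1/2 - X*(1-δ) by linarith)]
  have hBA : 3*X*(1-δ) ≤ c₁*X*(ζ^2 - δ*ρ - 2*η) + c₁^2*X^2*(δ*ρ*ζ^2 - (δ*ρ+η)^2) := by
    linarith [t1, t2, h16, hmid]
  -- A ≤ 9 c₁²
  have h_lb : (0:ℝ) ≤ δ*ρ+η := by linarith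
  have h_ub : δ*ρ+η ≤ 101/100 := by linarith
  have hs2 : (δ*ρ+η)^2 ≤ 2 := by
    linarith [mul_nonneg h_lb (show (0:ℝ) ≤ 101/100 - (δ*ρ+η) by linarith)]
  have hX2 : (0:ℝ) ≤ 1 - X^2 := by
    linarith [mul_nonneg hX0.le (show (0:ℝ) ≤ 1 - X by linarith)]
  have hsX : (δ*ρ+η)^2*X^2 ≤ 2 := by
    linarith [mul_nonneg (sq_nonneg (δ*ρ+η)) hX2, hs2]
  have t3 : c₁^2*(δ*ρ+η)^2*X^2 ≤ 2*c₁^2 := by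
    linarith [mul_nonneg (sq_nonneg c₁) (show (0:ℝ) ≤ 2 - (δ*ρ+η)^2*X^2 by linarith)]
  have hX3 : (2*δ*ρ+2*η)*X ≤ 3 := by
    linarith [mul_nonneg (show (0:ℝ) ≤ 2*δ*ρ+2*η by linarith) (show (0:ℝ) ≤ 1 - X by linarith)]
  have t4 : c₁*(2*δ*ρ+2*η)*X ≤ 3*c₁ := by
    linarith [mul_nonneg (show (0:ℝ) ≤ c₁ by linarith) (show (0:ℝ) ≤ 3 - (2*δ*ρ+2*η)*X by linarith)]
  have hcsq : 10*c₁ ≤ c₁^2 := by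
    linarith [mul_nonneg (show (0:ℝ) ≤ c₁ - 10 by linarith) (show (0:ℝ) ≤ c₁ by linarith)]
  have hA9 : 1 + c₁*(2*δ*ρ + 2*η)*X + c₁^2*(δ*ρ+η)^2*X^2 ≤ 9*c₁^2 := by
    linarith
  -- the error-term bound
  have hEε0 : 0 ≤ 3*(E*ε) := by positivity
  have step1 : 3*(E*ε)*(1 + c₁*(2*δ*ρ + 2*η)*X + c₁^2*(δ*ρ+η)^2*X^2) ≤ 3*(E*ε)*(9*c₁^2) :=
    mul_le_mul_of_nonneg_left hA9 hEε0
  have heq : 3*(E*ε)*(9*c₁^2) = (27/20)*(1-δ)*(c₁*E) := by rw [← hεc]; ring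
  have hEA : 3*(E*ε)*(1 + c₁*(2*δ*ρ + 2*η)*X + c₁^2*(δ*ρ+η)^2*X^2) ≤ 3*X*(1-δ) := by
    linarith [step1, heq,
      mul_nonneg (show (0:ℝ) ≤ 1-δ by linarith) (show (0:ℝ) ≤ X - 20*c₁*E by linarith), hu0]
  linarith [hBA, hEA]
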